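/- Let D be a nonempty closed convex subset of X and C a closed convex set with int(C ∩ D) ≠ ∅. Let (r_n) be positive with r_n → 0 and Σ_n r_n = ∞. Define x_0 ∈ C and x_{n+1} := P_C(P_D x_n + r_n (P_D x_n − x_n)/‖P_D x_n − x_n‖) if x_n ∉ D, and x_{n+1} := x_n if x_n ∈ D. Then (x_n) lies eventually in C ∩ D. -/

import Mathlib

open RealInnerProductSpace

section aux
variable {X : Type*} [NormedAddCommGroup X] [InnerProductSpace ℝ X]

lemma proj_inner_le {K : Set X} (hK : Convex ℝ K)
    (P : X → X) (hP : ∀ x, P x ∈ K ∧ ∀ c ∈ K, ‖x - P x‖ ≤ ‖x - c‖)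
    (x : X) {w : X} (hw : w ∈ K) : ⟪x - P x, w - P x⟫ ≤ 0 := by
  have hne : Nonempty K := ⟨⟨w, hw⟩⟩
  have hinf : ‖x - P x‖ = ⨅ c : K, ‖x - (c : X)‖ := by
    refine le_antisymm (le_ciInf fun c => (hP x).2 c c.2) ?_
    have hb : BddBelow (Set.range fun c : K => ‖x - (c : X)‖) := by
      refine ⟨0, ?_⟩; rintro _ ⟨c, rfl⟩; positivity
    exact ciInf_le hb ⟨P x, (hP x).1⟩
  exact (norm_eq_iInf_iff_real_inner_le_zero hK (hP x).1).mp hinf w hw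

omit [InnerProductSpace ℝ X] in
lemma proj_fix {K : Set X}
    (P : X → X) (hP : ∀ x, P x ∈ K ∧ ∀ c ∈ K, ‖x - P x‖ ≤ ‖x - c‖)
    {w : X} (hw : w ∈ K) : P w = w := by
  have h := (hP w).2 w hw
  simp only [sub_self, norm_zero] at h
  have := le_antisymm h (norm_nonneg _)
  rw [norm_eq_zero, sub_eq_zero] at this
  exact this.symm

lemma proj_nonexp {K : Set X} (hK : Convex ℝ K)
    (P : X → X) (hP : ∀ x, P x ∈ K ∧ ∀ c ∈ K, ‖x - P x‖ ≤ ‖x - c‖)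
    (u v : X) : ‖P u - P v‖ ≤ ‖u - v‖ := by
  have h1 : ⟪u - P u, P v - P u⟫ ≤ 0 := proj_inner_le hK P hP u (hP v).1
  have h2 : ⟪v - P v, P u - P v⟫ ≤ 0 := proj_inner_le hK P hP v (hP u).1
  have hexp : ⟪u - v, P u - P v⟫
      = ⟪u - P u, P u - P v⟫ + ⟪P v - v, P u - P v⟫ + ‖P u - P v‖ ^ 2 := by
    have hd : u - v = (u - P u) + (P v - v) + (P u - P v) := by abel
    rw [hd, inner_add_left, inner_add_left, real_inner_self_eq_norm_sq]
  have e1 : ⟪u - P u, P u - P v⟫ = -⟪u - P u, P v - P u⟫ := by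
    rw [← inner_neg_right]; congr 1; abel
  have e2 : ⟪P v - v, P u - P v⟫ = -⟪v - P v, P u - P v⟫ := by
    rw [← inner_neg_left]; congr 1; abel
  have key : ‖P u - P v‖ ^ 2 ≤ ⟪u - v, P u - P v⟫ := by
    rw [hexp, e1, e2]; linarith
  have hcs := real_inner_le_norm (u - v) (P u - P v)
  rcases (norm_nonneg (P u - P v)).eq_or_lt with h0 | h0
  · rw [← h0]; exact norm_nonneg _
  · have : ‖P u - P v‖ * ‖P u - P v‖ ≤ ‖u - v‖ * ‖P u - P v‖ := by nlinarith
    exact le_of_mul_le_mul_right this h0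

end aux

theorem convex_feasibility_finite
    {X : Type*} [NormedAddCommGroup X] [InnerProductSpace ℝ X] [CompleteSpace X]
    (D : Set X) (hDne : D.Nonempty) (hDcl : IsClosed D) (hDcv : Convex ℝ D)
    (C : Set X) (hCcl : IsClosed C) (hCcv : Convex ℝ C)
    (hint : (interior (C ∩ D)).Nonempty)
    (PC PD : X → X)
    (hPC : ∀ x : X, PC x ∈ C ∧ ∀ c ∈ C, ‖x - PC x‖ ≤ ‖x - c‖)
    (hPD : ∀ x : X, PD x ∈ D ∧ ∀ d ∈ D, ‖x - PD x‖ ≤ ‖x - d‖)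
    (r : ℕ → ℝ) (hrpos : ∀ n, 0 < r n)
    (hrlim : Filter.Tendsto r Filter.atTop (nhds 0))
    (hdiv : Filter.Tendsto (fun N => ∑ n ∈ Finset.range N, r n)
      Filter.atTop Filter.atTop)
    (x : ℕ → X) (hx0 : x 0 ∈ C)
    (hrec : ∀ n : ℕ,
      (x n ∉ D → x (n + 1) =
        PC (PD (x n) + (r n / ‖PD (x n) - x n‖) • (PD (x n) - x n))) ∧
      (x n ∈ D → x (n + 1) = x n)) :
    ∃ N : ℕ, ∀ n ≥ N, x n ∈ C ∩ D := by
  obtain ⟨z, hz⟩ := hint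
  obtain ⟨ε, hε, hsub⟩ := Metric.isOpen_iff.mp isOpen_interior z hz
  set ρ : ℝ := ε / 2 with hρdef
  have hρ : 0 < ρ := half_pos hε
  have hball : Metric.closedBall z ρ ⊆ C ∩ D := fun w hw =>
    interior_subset (hsub (lt_of_le_of_lt (Metric.mem_closedBall.mp hw) (half_lt_self hε)))
  have hzCD : z ∈ C ∩ D := interior_subset hz
  -- all iterates stay in C
  have hxC : ∀ n, x n ∈ C := by
    intro n
    induction n with
    | zero => exact hx0
    | succ n ih =>
      by_cases hD : x n ∈ D
      · rw [(hrec n).2 hD]; exact ih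
      · rw [(hrec n).1 hD]; exact (hPC _).1
  -- key decrease estimate
  have key : ∀ n, x n ∉ D → r n ≤ ρ →
      ‖x (n + 1) - z‖ ^ 2 ≤ ‖x n - z‖ ^ 2 - ρ * r n := by
    intro n hnD hrn
    set y : X := PD (x n) with hy
    set d : ℝ := ‖y - x n‖ with hd
    have hne : y ≠ x n := fun h => hnD (h ▸ (hPD (x n)).1)
    have hdpos : 0 < d := by
      rw [hd, norm_pos_iff, sub_ne_zero]; exact hne
    -- the auxiliary point in the ball
    set w : X := z - (ρ / d) • (y - x n) with hw
    have hwD : w ∈ D := by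
      refine (hball ?_).2
      rw [Metric.mem_closedBall, dist_eq_norm, hw]
      have : z - (ρ / d) • (y - x n) - z = -((ρ / d) • (y - x n)) := by abel
      rw [this, norm_neg, norm_smul, Real.norm_eq_abs, abs_of_pos (by positivity), ← hd]
      field_simp; exact le_rfl
    have hproj := proj_inner_le hDcv PD hPD (x n) hwD
    -- ⟪x n - y, w - y⟫ ≤ 0
    have hinner1 : ⟪x n - y, w - y⟫ = ⟪x n - y, z - y⟫ + (ρ / d) * d ^ 2 := by
      have hwy : w - y = (z - y) + (-(ρ / d)) • (y - x n) := by rw [hw]; module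
      rw [hwy, inner_add_right, real_inner_smul_right]
      have : ⟪x n - y, y - x n⟫ = -(d ^ 2) := by
        have h1 : y - x n = -(x n - y) := by abel
        rw [h1, inner_neg_right, real_inner_self_eq_norm_sq]
        have : ‖x n - y‖ = d := by rw [hd, norm_sub_rev]
        rw [this]
      rw [this]; ring
    have hkey1 : ⟪x n - y, z - y⟫ ≤ -(ρ * d) := by
      rw [← hy] at hproj
      rw [hinner1] at hproj
      have : (ρ / d) * d ^ 2 = ρ * d := by field_simp
      rw [this] at hproj; linarith
    -- norm of the step point
    have hPDz : PD z = z := proj_fix PD hPD hzCD.2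
    have hPCz : PC z = z := proj_fix PC hPC hzCD.1
    have hyz : ‖y - z‖ ≤ ‖x n - z‖ := by
      have := proj_nonexp hDcv PD hPD (x n) z
      rwa [hPDz, ← hy] at this
    set s : X := y + (r n / d) • (y - x n) with hs
    have hstep : x (n + 1) = PC s := by rw [(hrec n).1 hnD]
    have hxs : ‖x (n + 1) - z‖ ≤ ‖s - z‖ := by
      rw [hstep]
      have := proj_nonexp hCcv PC hPC s z
      rwa [hPCz] at this
    have hsz : ‖s - z‖ ^ 2 = ‖y - z‖ ^ 2 + 2 * ((r n / d) * ⟪y - z, y - x n⟫) + (r n) ^ 2 := by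
      have h1 : s - z = (y - z) + (r n / d) • (y - x n) := by rw [hs]; abel
      have hrd : (0:ℝ) < r n / d := div_pos (hrpos n) hdpos
      have hdne : d ≠ 0 := ne_of_gt hdpos
      rw [h1, norm_add_sq_real, real_inner_smul_right, norm_smul, Real.norm_eq_abs,
        abs_of_pos hrd, ← hd]
      field_simp
    have hinner2 : ⟪y - z, y - x n⟫ ≤ -(ρ * d) := by
      have : ⟪y - z, y - x n⟫ = ⟪x n - y, z - y⟫ := by
        have h1 : y - z = -(z - y) := by abel
        have h2 : y - x n = -(x n - y) := by abel
        rw [h1, h2, inner_neg_neg, real_inner_comm]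
      rw [this]; exact hkey1
    have hterm : (r n / d) * ⟪y - z, y - x n⟫ ≤ -(ρ * r n) := by
      have h1 : (r n / d) * ⟪y - z, y - x n⟫ ≤ (r n / d) * (-(ρ * d)) :=
        mul_le_mul_of_nonneg_left hinner2 (le_of_lt (div_pos (hrpos n) hdpos))
      have h2 : (r n / d) * (-(ρ * d)) = -(ρ * r n) := by field_simp
      linarith
    have hsq : ‖x (n + 1) - z‖ ^ 2 ≤ ‖s - z‖ ^ 2 := by
      have := hxs
      nlinarith [norm_nonneg (x (n + 1) - z), norm_nonneg (s - z)]
    have hyz2 : ‖y - z‖ ^ 2 ≤ ‖x n - z‖ ^ 2 := by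
      nlinarith [norm_nonneg (y - z), norm_nonneg (x n - z)]
    have hrn2 : (r n) ^ 2 ≤ ρ * r n := by nlinarith [hrpos n]
    calc ‖x (n + 1) - z‖ ^ 2 ≤ ‖s - z‖ ^ 2 := hsq
      _ = ‖y - z‖ ^ 2 + 2 * ((r n / d) * ⟪y - z, y - x n⟫) + (r n) ^ 2 := hsz
      _ ≤ ‖x n - z‖ ^ 2 + 2 * (-(ρ * r n)) + ρ * r n := by linarith
      _ = ‖x n - z‖ ^ 2 - ρ * r n := by ring
  -- choose N₀ with r n ≤ ρ for n ≥ N₀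
  obtain ⟨N₀, hN₀⟩ := Filter.eventually_atTop.mp (hrlim.eventually_le_const hρ)
  by_cases hhit : ∃ N, N₀ ≤ N ∧ x N ∈ D
  · obtain ⟨N, _, hND⟩ := hhit
    have hstay : ∀ k, x (N + k) = x N := by
      intro k
      induction k with
      | zero => rfl
      | succ k ih =>
        have hD : x (N + k) ∈ D := ih ▸ hND
        have := (hrec (N + k)).2 hD
        rw [show N + (k+1) = (N + k) + 1 from rfl, this, ih]
    refine ⟨N, fun n hn => ?_⟩
    obtain ⟨k, rfl⟩ := Nat.exists_eq_add_of_le hn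
    rw [hstay k]
    exact ⟨hxC N, hND⟩
  · exfalso
    push_neg at hhit
    have hdec : ∀ k, ‖x (N₀ + k) - z‖ ^ 2 + ρ * ∑ i ∈ Finset.range k, r (N₀ + i)
        ≤ ‖x N₀ - z‖ ^ 2 := by
      intro k
      induction k with
      | zero => simp
      | succ k ih =>
        have hnot : x (N₀ + k) ∉ D := hhit (N₀ + k) (Nat.le_add_right _ _)
        have hkey := key (N₀ + k) hnot (hN₀ (N₀ + k) (Nat.le_add_right _ _))
        rw [Finset.sum_range_succ, show N₀ + (k+1) = (N₀ + k) + 1 from rfl]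
        have hρr : 0 < ρ * r (N₀ + k) := mul_pos hρ (hrpos _)
        nlinarith
    -- tail sums diverge
    have hsum : ∀ k, ∑ i ∈ Finset.range (N₀ + k), r i
        = ∑ i ∈ Finset.range N₀, r i + ∑ i ∈ Finset.range k, r (N₀ + i) := by
      intro k
      induction k with
      | zero => simp
      | succ k ih =>
        rw [show N₀ + (k+1) = (N₀ + k) + 1 from rfl, Finset.sum_range_succ,
          Finset.sum_range_succ, ih]; ring
    set B : ℝ := ‖x N₀ - z‖ ^ 2 / ρ + ∑ i ∈ Finset.range N₀, r i with hB
    obtain ⟨M, hM⟩ := Filter.eventually_atTop.mp (hdiv.eventually_gt_atTop B)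
    have hMk := hM (N₀ + M) (Nat.le_add_left _ _)
    rw [hsum M] at hMk
    have htail : ‖x N₀ - z‖ ^ 2 / ρ < ∑ i ∈ Finset.range M, r (N₀ + i) := by
      rw [hB] at hMk; linarith
    have h1 : ‖x N₀ - z‖ ^ 2 < ρ * ∑ i ∈ Finset.range M, r (N₀ + i) := by
      rw [div_lt_iff₀ hρ] at htail; linarith [mul_comm ρ (∑ i ∈ Finset.range M, r (N₀ + i))]
    have h2 := hdec M
    nlinarith [sq_nonneg ‖x (N₀ + M) - z‖]
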